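/- Let M ≥ 1 and let J be the (M+3) × (M+3) real matrix (the Jacobian of the multi-variant SEIR system at the disease-free equilibrium) given in block form by: J_{1,1} = −(ν+μ); J_{1, i+2} = −β_i⁰ for i = 1,…,M; J_{2,2} = −(η+μ); J_{2, i+2} = β_i⁰ for i = 1,…,M; J_{i+2, 2} = η_i and J_{i+2, i+2} = −(γ_i+μ) for i = 1,…,M; J_{M+3, 1} = ν; J_{M+3, i+2} = γ_i for i = 1,…,M; J_{M+3, M+3} = −μ; and all other entries zero. Assume μ > 0, ν > 0, β_i⁰ > 0, η_i > 0, γ_i > 0 for all i, where η = Σ_{i=1}^M η_i. If ℛ₀ = Σ_{i=1}^M β_i⁰ η_i / ((γ_i + μ)(η + μ)) < 1, then every complex eigenvalue of J has strictly negative real part. -/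

import Mathlib

/-- Local asymptotic stability of the disease-free equilibrium of the
multi-variant SEIR model: if `ℛ₀ < 1`, every complex eigenvalue of the Jacobian
at the disease-free equilibrium has strictly negative real part. -/
theorem seir_disease_free_equilibrium_stable
    (M : ℕ) (hM : 1 ≤ M) (μ ν η : ℝ) (hμ : 0 < μ) (hν : 0 < ν)
    (β0 ηv γ : Fin M → ℝ) (hβ0 : ∀ i, 0 < β0 i) (hηv : ∀ i, 0 < ηv i)
    (hγ : ∀ i, 0 < γ i) (hη : η = ∑ i, ηv i)
    (J : Matrix (Fin (M + 3)) (Fin (M + 3)) ℝ)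
    (hJ00 : J 0 0 = -(ν + μ))
    (hJ01 : J 0 1 = 0)
    (hJ0I : ∀ i : Fin M, J 0 i.succ.succ.castSucc = -β0 i)
    (hJ0R : J 0 (Fin.last (M + 2)) = 0)
    (hJ10 : J 1 0 = 0)
    (hJ11 : J 1 1 = -(η + μ))
    (hJ1I : ∀ i : Fin M, J 1 i.succ.succ.castSucc = β0 i)
    (hJ1R : J 1 (Fin.last (M + 2)) = 0)
    (hJI0 : ∀ i : Fin M, J i.succ.succ.castSucc 0 = 0)
    (hJI1 : ∀ i : Fin M, J i.succ.succ.castSucc 1 = ηv i)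
    (hJII : ∀ i j : Fin M, J i.succ.succ.castSucc j.succ.succ.castSucc =
      if i = j then -(γ i + μ) else 0)
    (hJIR : ∀ i : Fin M, J i.succ.succ.castSucc (Fin.last (M + 2)) = 0)
    (hJR0 : J (Fin.last (M + 2)) 0 = ν)
    (hJR1 : J (Fin.last (M + 2)) 1 = 0)
    (hJRI : ∀ i : Fin M, J (Fin.last (M + 2)) i.succ.succ.castSucc = γ i)
    (hJRR : J (Fin.last (M + 2)) (Fin.last (M + 2)) = -μ)
    (hR0 : (∑ i, β0 i * ηv i / ((γ i + μ) * (η + μ))) < 1) :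
    ∀ zc ∈ spectrum ℂ (J.map (Complex.ofReal : ℝ → ℂ)), zc.re < 0 := by
  intro z hz
  by_contra hre
  push_neg at hre
  set A := J.map (Complex.ofReal : ℝ → ℂ) with hA
  rw [spectrum.mem_iff] at hz
  have hdet : (z • (1 : Matrix (Fin (M+3)) (Fin (M+3)) ℂ) - A).det = 0 := by
    by_contra h
    apply hz
    rw [Algebra.algebraMap_eq_smul_one]
    exact (Matrix.isUnit_iff_isUnit_det _).mpr (isUnit_iff_ne_zero.mpr h)
  obtain ⟨v, hvne, hv⟩ := Matrix.exists_mulVec_eq_zero_iff.mpr hdet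
  have hmul : A.mulVec v = z • v := by
    rw [Matrix.sub_mulVec, Matrix.smul_mulVec, Matrix.one_mulVec, sub_eq_zero] at hv
    exact hv.symm
  have rowEq : ∀ k, ∑ j, A k j * v j = z * v k := by
    intro k
    have h2 := congrFun hmul k
    simpa [Matrix.mulVec, dotProduct] using h2
  have hsplit : ∀ f : Fin (M+3) → ℂ, ∑ k, f k
      = f 0 + f 1 + (∑ i : Fin M, f i.succ.succ.castSucc) + f (Fin.last (M+2)) := by
    intro f
    rw [Fin.sum_univ_castSucc, Fin.sum_univ_succ, Fin.sum_univ_succ]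
    have e0 : ((0 : Fin (M+2)).castSucc) = (0 : Fin (M+3)) := by ext; simp
    have e1 : (((0 : Fin (M+1)).succ).castSucc) = (1 : Fin (M+3)) := by ext; simp
    rw [e0, e1]; ring
  set w : Fin M → ℂ := fun i => v i.succ.succ.castSucc with hw
  -- row equations
  have row0 : (-(ν+μ) : ℂ) * v 0 + ∑ i, (-(β0 i) : ℂ) * w i = z * v 0 := by
    have h := rowEq 0
    rw [hsplit] at h
    simpa [hA, Matrix.map_apply, hJ00, hJ01, hJ0I, hJ0R, hw, -Fin.castSucc_succ] using h
  have row1 : (-(η+μ) : ℂ) * v 1 + ∑ i, (β0 i : ℂ) * w i = z * v 1 := by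
    have h := rowEq 1
    rw [hsplit] at h
    simpa [hA, Matrix.map_apply, hJ10, hJ11, hJ1I, hJ1R, hw, -Fin.castSucc_succ] using h
  have rowI : ∀ i : Fin M, (ηv i : ℂ) * v 1 + (-(γ i + μ) : ℂ) * w i = z * w i := by
    intro i
    have h := rowEq i.succ.succ.castSucc
    rw [hsplit] at h
    have hdiag : ∑ j : Fin M, A i.succ.succ.castSucc j.succ.succ.castSucc * v j.succ.succ.castSucc
        = (-(γ i + μ) : ℂ) * w i := by
      rw [Finset.sum_eq_single i]
      · simp [hA, Matrix.map_apply, hJII, hw, -Fin.castSucc_succ]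
      · intro j _ hj
        simp [hA, Matrix.map_apply, hJII, if_neg (Ne.symm hj), -Fin.castSucc_succ]
      · simp
    rw [hdiag] at h
    simpa [hA, Matrix.map_apply, hJI0 i, hJI1 i, hJIR i, hw, -Fin.castSucc_succ] using h
  have rowR : (ν : ℂ) * v 0 + ∑ i, (γ i : ℂ) * w i + (-μ : ℂ) * v (Fin.last (M+2))
      = z * v (Fin.last (M+2)) := by
    have h := rowEq (Fin.last (M+2))
    rw [hsplit] at h
    simpa [hA, Matrix.map_apply, hJR0, hJR1, hJRI, hJRR, hw, add_assoc, -Fin.castSucc_succ] using h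
  -- nonvanishing denominators
  have hzc : ∀ c : ℝ, 0 < c → z + (c : ℂ) ≠ 0 := by
    intro c hc h
    have := congrArg Complex.re h
    simp [Complex.add_re, Complex.ofReal_re] at this
    linarith
  have hwv : ∀ i : Fin M, (z + ((γ i + μ : ℝ) : ℂ)) * w i = (ηv i : ℂ) * v 1 := by
    intro i
    have h := rowI i
    push_cast at h ⊢
    ring_nf
    ring_nf at h
    linear_combination -h
  by_cases hv1 : v 1 = 0
  · -- all infected components vanish, then everything vanishes
    have hwz : ∀ i, w i = 0 := by
      intro i
      have h := hwv i
      rw [hv1, mul_zero] at h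
      exact (mul_eq_zero.mp h).resolve_left (hzc _ (by have := hγ i; linarith)) 
    have hv0 : v 0 = 0 := by
      have h := row0
      simp only [hwz, mul_zero, Finset.sum_const_zero, add_zero] at h
      have h2 : (z + ((ν + μ : ℝ) : ℂ)) * v 0 = 0 := by push_cast; linear_combination -h
      exact (mul_eq_zero.mp h2).resolve_left (hzc _ (by linarith))
    have hvR : v (Fin.last (M+2)) = 0 := by
      have h := rowR
      simp only [hwz, mul_zero, Finset.sum_const_zero, hv0, add_zero, zero_add] at h
      have h2 : (z + ((μ : ℝ) : ℂ)) * v (Fin.last (M+2)) = 0 := by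
        push_cast; linear_combination -h
      exact (mul_eq_zero.mp h2).resolve_left (hzc _ hμ)
    apply hvne
    funext k
    obtain ⟨kv, hk⟩ := k
    rcases Nat.lt_or_ge kv 2 with h2 | h2
    · interval_cases kv
      · exact (by ext; simp : (⟨0, hk⟩ : Fin (M+3)) = 0) ▸ hv0
      · exact (by ext; simp : (⟨1, hk⟩ : Fin (M+3)) = 1) ▸ hv1
    · rcases Nat.lt_or_ge kv (M+2) with h3 | h3
      · have he : (⟨kv, hk⟩ : Fin (M+3)) = (⟨kv - 2, by omega⟩ : Fin M).succ.succ.castSucc := by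
          ext; simp [Fin.val_succ]; omega
        exact he ▸ hwz ⟨kv - 2, by omega⟩
      · have he : (⟨kv, hk⟩ : Fin (M+3)) = Fin.last (M+2) := by ext; simp; omega
        exact he ▸ hvR
  · -- infected block: contradiction with R0 < 1
    have hwf : ∀ i : Fin M, w i = (ηv i : ℂ) * v 1 / (z + ((γ i + μ : ℝ) : ℂ)) := by
      intro i
      have hne := hzc _ (by have := hγ i; linarith : (0:ℝ) < γ i + μ)
      rw [eq_div_iff hne]
      linear_combination hwv i
    have key : z + ((η + μ : ℝ) : ℂ) = ∑ i, ((β0 i * ηv i : ℝ) : ℂ) / (z + ((γ i + μ : ℝ) : ℂ)) := by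
      have h : (z + ((η + μ : ℝ) : ℂ)) * v 1
          = (∑ i, ((β0 i * ηv i : ℝ) : ℂ) / (z + ((γ i + μ : ℝ) : ℂ))) * v 1 := by
        have h1 : (z + ((η + μ : ℝ) : ℂ)) * v 1 = ∑ i, (β0 i : ℂ) * w i := by
          push_cast; linear_combination -row1
        rw [h1, Finset.sum_mul]
        refine Finset.sum_congr rfl fun i _ => ?_
        have hne := hzc _ (by have := hγ i; linarith : (0:ℝ) < γ i + μ)
        rw [div_mul_eq_mul_div, eq_comm, div_eq_iff hne]
        have hwi := hwv i
        push_cast at hwi ⊢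
        linear_combination -(β0 i : ℂ) * hwi
      exact mul_right_cancel₀ hv1 h
    have habs : (η + μ : ℝ) ≤ ‖z + ((η + μ : ℝ) : ℂ)‖ := by
      calc (η + μ : ℝ) ≤ (z + ((η + μ : ℝ) : ℂ)).re := by
            simp [Complex.add_re]; linarith
        _ ≤ ‖z + ((η + μ : ℝ) : ℂ)‖ := Complex.re_le_norm _
    have hbound : ‖z + ((η + μ : ℝ) : ℂ)‖
        ≤ ∑ i, β0 i * ηv i / (γ i + μ) := by
      rw [key]
      refine le_trans (norm_sum_le _ _) (Finset.sum_le_sum fun i _ => ?_)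
      have hci : (0:ℝ) < γ i + μ := by have := hγ i; linarith
      have hb : (0:ℝ) ≤ β0 i * ηv i := le_of_lt (mul_pos (hβ0 i) (hηv i))
      rw [norm_div, Complex.norm_of_nonneg hb]
      have hd : γ i + μ ≤ ‖z + ((γ i + μ : ℝ) : ℂ)‖ := by
        calc γ i + μ ≤ (z + ((γ i + μ : ℝ) : ℂ)).re := by simp [Complex.add_re]; linarith
          _ ≤ _ := Complex.re_le_norm _
      exact div_le_div_of_nonneg_left hb hci hd |>.trans_eq rfl
    have hηpos : (0:ℝ) < η + μ := by
      have : (0:ℝ) ≤ η := hη ▸ Finset.sum_nonneg fun i _ => (hηv i).le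
      linarith
    have hsum : ∑ i, β0 i * ηv i / (γ i + μ) < η + μ := by
      have h1 : ∑ i, β0 i * ηv i / (γ i + μ)
          = (∑ i, β0 i * ηv i / ((γ i + μ) * (η + μ))) * (η + μ) := by
        rw [Finset.sum_mul]
        refine Finset.sum_congr rfl fun i _ => ?_
        have hci : (γ i + μ) ≠ 0 := by have := hγ i; positivity
        field_simp
      rw [h1]
      calc _ < 1 * (η + μ) := by exact mul_lt_mul_of_pos_right hR0 hηpos
        _ = η + μ := one_mul _
    linarith [habs.trans hbound]
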